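/- Chain rule for directed information with an initial condition: for finite random variables x_0 and sequences x^n, e^n with x_i a deterministic function of (x_0, e^{i-1}) for each i, Σ_{i=1}^n I(x^i; e_i | e^{i-1}) = Σ_{i=1}^n [H(e_i | e^{i-1}) − H(e_i | e^{i-1}, x_0, x^i)] + Σ_{i=1}^n I(x_0; e_i | e^{i-1}, x^i); in particular I(x^n → e^n) ≤ I(x_0; e^n) when additionally H(x^i | x_0, e^{i-1}) = 0. -/

import Mathlib

open scoped BigOperators

/-- Distribution of a finite-valued random variable `X` under pmf `p`. -/
noncomputable def rvDist {Ω A : Type*} [Fintype Ω] [Fintype A] [DecidableEq A]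
    (p : Ω → ℝ) (X : Ω → A) (a : A) : ℝ := ∑ ω, if X ω = a then p ω else 0

/-- Shannon entropy `H(X)`. -/
noncomputable def ent {Ω A : Type*} [Fintype Ω] [Fintype A] [DecidableEq A]
    (p : Ω → ℝ) (X : Ω → A) : ℝ := ∑ a, Real.negMulLog (rvDist p X a)

/-- Conditional entropy `H(X | Y) = H(X,Y) - H(Y)`. -/
noncomputable def condEnt {Ω A B : Type*} [Fintype Ω] [Fintype A] [DecidableEq A]
    [Fintype B] [DecidableEq B] (p : Ω → ℝ) (X : Ω → A) (Y : Ω → B) : ℝ :=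
  ent p (fun ω => (X ω, Y ω)) - ent p Y

/-- Mutual information `I(X;Y) = H(X)+H(Y)-H(X,Y)`. -/
noncomputable def MI {Ω A B : Type*} [Fintype Ω] [Fintype A] [DecidableEq A]
    [Fintype B] [DecidableEq B] (p : Ω → ℝ) (X : Ω → A) (Y : Ω → B) : ℝ :=
  ent p X + ent p Y - ent p (fun ω => (X ω, Y ω))

/-- Conditional mutual information `I(X;Y|Z) = H(X|Z)+H(Y|Z)-H(X,Y|Z)`. -/
noncomputable def CMI {Ω A B C : Type*} [Fintype Ω] [Fintype A] [DecidableEq A]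
    [Fintype B] [DecidableEq B] [Fintype C] [DecidableEq C]
    (p : Ω → ℝ) (X : Ω → A) (Y : Ω → B) (Z : Ω → C) : ℝ :=
  condEnt p X Z + condEnt p Y Z - condEnt p (fun ω => (X ω, Y ω)) Z

/-- The prefix `x^i = (x_1, …, x_i)` of a random sequence, as a random variable. -/
def pre {Ω A : Type*} {n : ℕ} (x : Fin n → Ω → A) (i : ℕ) (h : i ≤ n) :
    Ω → (Fin i → A) := fun ω j => x (Fin.castLE h j) ω

/-- Directed information `I(x^n → y^n) = ∑_{i=1}^n I(x^i; y_i | y^{i-1})`. -/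
noncomputable def DI {Ω A B : Type*} [Fintype Ω] [Fintype A] [DecidableEq A]
    [Fintype B] [DecidableEq B] {n : ℕ}
    (p : Ω → ℝ) (x : Fin n → Ω → A) (y : Fin n → Ω → B) : ℝ :=
  ∑ i : Fin n, CMI p (pre x (i.1+1) i.isLt) (y i) (pre y i.1 i.isLt.le)


open Real Finset

section Basic
variable {Ω A B : Type*} [Fintype Ω] [Fintype A] [DecidableEq A] [Fintype B] [DecidableEq B]
  (p : Ω → ℝ)

lemma rvDist_nonneg (hp : ∀ ω, 0 ≤ p ω) (X : Ω → A) (a : A) : 0 ≤ rvDist p X a :=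
  Finset.sum_nonneg fun ω _ => by split <;> simp [hp ω]

lemma rvDist_comp (f : A → B) (hf : Function.Injective f) (X : Ω → A) (a : A) :
    rvDist p (fun ω => f (X ω)) (f a) = rvDist p X a :=
  Finset.sum_congr rfl fun ω _ => by simp [hf.eq_iff]

lemma ent_comp (f : A → B) (hf : Function.Injective f) (X : Ω → A) :
    ent p (fun ω => f (X ω)) = ent p X := by
  unfold ent
  rw [← Finset.sum_subset (Finset.subset_univ (Finset.univ.image f))]
  · rw [Finset.sum_image (fun a _ b _ h => hf h)]
    exact Finset.sum_congr rfl fun a _ => by rw [rvDist_comp p f hf]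
  · intro b _ hb
    have h0 : rvDist p (fun ω => f (X ω)) b = 0 := by
      apply Finset.sum_eq_zero; intro ω _
      simp only [ite_eq_right_iff]; intro h
      exact absurd (h ▸ Finset.mem_image_of_mem f (Finset.mem_univ (X ω))) hb
    simp [h0]

lemma ent_eq_of_inj (X : Ω → A) (Y : Ω → B) (f : A → B) (hf : Function.Injective f)
    (h : ∀ ω, Y ω = f (X ω)) : ent p Y = ent p X := by
  rw [show Y = fun ω => f (X ω) from funext h]; exact ent_comp p f hf X

lemma rvDist_dropFirst (X : Ω → A) (Y : Ω → B) (b : B) :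
    rvDist p Y b = ∑ a, rvDist p (fun ω => (X ω, Y ω)) (a, b) := by
  unfold rvDist
  rw [Finset.sum_comm]
  refine Finset.sum_congr rfl fun ω _ => ?_
  have : ∀ a : A, (if (X ω, Y ω) = (a, b) then p ω else 0)
      = if X ω = a then (if Y ω = b then p ω else 0) else 0 := by
    intro a; by_cases h1 : X ω = a <;> by_cases h2 : Y ω = b <;> simp [Prod.ext_iff, h1, h2]
  simp_rw [this]
  rw [Finset.sum_ite_eq Finset.univ (X ω) (fun a => if Y ω = b then p ω else 0)]
  simp

lemma ent_const (hp1 : ∑ ω, p ω = 1) (c : A) : ent p (fun _ => c) = 0 := by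
  unfold ent
  apply Finset.sum_eq_zero
  intro a _
  by_cases h : c = a
  · simp [rvDist, h, hp1]
  · simp [rvDist, h]

end Basic

open Real Finset

lemma negMulLog_add_le {x y : ℝ} (hx : 0 ≤ x) (hy : 0 ≤ y) :
    Real.negMulLog (x + y) ≤ Real.negMulLog x + Real.negMulLog y := by
  rcases eq_or_lt_of_le hx with h | h
  · simp [← h]
  rcases eq_or_lt_of_le hy with h' | h'
  · simp [← h']
  simp only [Real.negMulLog, neg_mul]
  have l1 : x * Real.log x ≤ x * Real.log (x + y) :=
    mul_le_mul_of_nonneg_left (Real.log_le_log h (by linarith)) hx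
  have l2 : y * Real.log y ≤ y * Real.log (x + y) :=
    mul_le_mul_of_nonneg_left (Real.log_le_log h' (by linarith)) hy
  nlinarith [l1, l2]

lemma negMulLog_sum_le {ι : Type*} (s : Finset ι) (f : ι → ℝ) (hf : ∀ i ∈ s, 0 ≤ f i) :
    Real.negMulLog (∑ i ∈ s, f i) ≤ ∑ i ∈ s, Real.negMulLog (f i) := by
  induction s using Finset.cons_induction with
  | empty => simp
  | cons a s ha ih =>
    rw [Finset.sum_cons, Finset.sum_cons]
    calc Real.negMulLog (f a + ∑ i ∈ s, f i)
        ≤ Real.negMulLog (f a) + Real.negMulLog (∑ i ∈ s, f i) :=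
          negMulLog_add_le (hf a (Finset.mem_cons_self _ _))
            (Finset.sum_nonneg fun i hi => hf i (Finset.mem_cons_of_mem hi))
      _ ≤ _ := add_le_add le_rfl (ih fun i hi => hf i (Finset.mem_cons_of_mem hi))

/-- Per-term bound for the submodularity inequality. -/
lemma per_term_bound {t m13 m23 m3 : ℝ} (ht : 0 ≤ t) (h13 : t ≤ m13) (h23 : t ≤ m23)
    (h3 : m13 ≤ m3) :
    t - m13 * m23 / m3 ≤ t * (Real.log t + Real.log m3 - Real.log m13 - Real.log m23) := by
  rcases eq_or_lt_of_le ht with h | h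
  · have h13' : 0 ≤ m13 := le_trans ht h13
    have h23' : 0 ≤ m23 := le_trans ht h23
    have h3' : 0 ≤ m3 := le_trans h13' h3
    have : 0 ≤ m13 * m23 / m3 := div_nonneg (mul_nonneg h13' h23') h3'
    simp [← h]; linarith
  · have h13' : 0 < m13 := lt_of_lt_of_le h h13
    have h23' : 0 < m23 := lt_of_lt_of_le h h23
    have h3' : 0 < m3 := lt_of_lt_of_le h13' h3
    have hu : 0 < m13 * m23 / (t * m3) := by positivity
    have hlog : Real.log (m13 * m23 / (t * m3)) ≤ m13 * m23 / (t * m3) - 1 :=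
      Real.log_le_sub_one_of_pos hu
    have hexp : Real.log (m13 * m23 / (t * m3))
        = Real.log m13 + Real.log m23 - Real.log t - Real.log m3 := by
      rw [Real.log_div (by positivity) (by positivity), Real.log_mul (ne_of_gt h13') (ne_of_gt h23'),
        Real.log_mul (ne_of_gt h) (ne_of_gt h3')]
      ring
    have key : t * Real.log (m13 * m23 / (t * m3)) ≤ t * (m13 * m23 / (t * m3) - 1) :=
      mul_le_mul_of_nonneg_left hlog ht
    have : t * (m13 * m23 / (t * m3)) = m13 * m23 / m3 := by
      field_simp
    nlinarith [key, hexp]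
open Real Finset

lemma negMulLog_sum_expand {ι : Type*} (s : Finset ι) (f : ι → ℝ) :
    Real.negMulLog (∑ i ∈ s, f i) = ∑ i ∈ s, -(f i * Real.log (∑ j ∈ s, f j)) := by
  rw [Real.negMulLog, neg_mul, Finset.sum_mul, ← Finset.sum_neg_distrib]

lemma key_ineq {A B C : Type*} [Fintype A] [Fintype B] [Fintype C]
    (q : A → B → C → ℝ) (hq : ∀ a b c, 0 ≤ q a b c) :
    (∑ a, ∑ b, ∑ c, Real.negMulLog (q a b c)) + ∑ c, Real.negMulLog (∑ a, ∑ b, q a b c)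
    ≤ (∑ a, ∑ c, Real.negMulLog (∑ b, q a b c))
      + ∑ b, ∑ c, Real.negMulLog (∑ a, q a b c) := by
  have hm13 : ∀ a c, 0 ≤ ∑ b, q a b c := fun a c => Finset.sum_nonneg fun b _ => hq a b c
  have hm23 : ∀ b c, 0 ≤ ∑ a, q a b c := fun b c => Finset.sum_nonneg fun a _ => hq a b c
  have hm3 : ∀ c, 0 ≤ ∑ a, ∑ b, q a b c := fun c => Finset.sum_nonneg fun a _ => hm13 a c
  have reord : ∀ f : A → B → C → ℝ, (∑ a, ∑ b, ∑ c, f a b c) = ∑ c, ∑ a, ∑ b, f a b c := by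
    intro f
    rw [show (∑ a, ∑ b, ∑ c, f a b c) = ∑ a, ∑ c, ∑ b, f a b c from
      Finset.sum_congr rfl fun a _ => Finset.sum_comm, Finset.sum_comm]
  -- expand each marginal entropy as a triple sum ordered (a, b, c)
  have e13 : (∑ a, ∑ c, Real.negMulLog (∑ b, q a b c))
      = ∑ a, ∑ b, ∑ c, -(q a b c * Real.log (∑ b', q a b' c)) := by
    refine Finset.sum_congr rfl fun a _ => ?_
    rw [Finset.sum_comm]
    exact Finset.sum_congr rfl fun c _ => negMulLog_sum_expand _ _
  have e23 : (∑ b, ∑ c, Real.negMulLog (∑ a, q a b c))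
      = ∑ a, ∑ b, ∑ c, -(q a b c * Real.log (∑ a', q a' b c)) := by
    rw [show (∑ a, ∑ b, ∑ c, -(q a b c * Real.log (∑ a', q a' b c)))
        = ∑ b, ∑ a, ∑ c, -(q a b c * Real.log (∑ a', q a' b c)) from Finset.sum_comm]
    refine Finset.sum_congr rfl fun b _ => ?_
    rw [Finset.sum_comm]
    exact Finset.sum_congr rfl fun c _ => negMulLog_sum_expand _ _
  have e3 : (∑ c, Real.negMulLog (∑ a, ∑ b, q a b c))
      = ∑ a, ∑ b, ∑ c, -(q a b c * Real.log (∑ a', ∑ b', q a' b' c)) := by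
    rw [reord fun a b c => -(q a b c * Real.log (∑ a', ∑ b', q a' b' c))]
    refine Finset.sum_congr rfl fun c _ => ?_
    rw [negMulLog_sum_expand]
    exact Finset.sum_congr rfl fun a _ => by
      rw [Finset.sum_mul, ← Finset.sum_neg_distrib]
  have eq : (∑ a, ∑ b, ∑ c, Real.negMulLog (q a b c))
      = ∑ a, ∑ b, ∑ c, -(q a b c * Real.log (q a b c)) := by
    refine Finset.sum_congr rfl fun a _ => Finset.sum_congr rfl fun b _ =>
      Finset.sum_congr rfl fun c _ => by rw [Real.negMulLog, neg_mul]
  rw [e13, e23, e3, eq]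
  rw [← sub_nonneg]
  have combine : (∑ a, ∑ b, ∑ c, -(q a b c * Real.log (∑ b', q a b' c)))
      + (∑ a, ∑ b, ∑ c, -(q a b c * Real.log (∑ a', q a' b c)))
      - ((∑ a, ∑ b, ∑ c, -(q a b c * Real.log (q a b c)))
        + ∑ a, ∑ b, ∑ c, -(q a b c * Real.log (∑ a', ∑ b', q a' b' c)))
      = ∑ a, ∑ b, ∑ c, (q a b c * (Real.log (q a b c) + Real.log (∑ a', ∑ b', q a' b' c)
          - Real.log (∑ b', q a b' c) - Real.log (∑ a', q a' b c))) := by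
    rw [← Finset.sum_add_distrib, ← Finset.sum_add_distrib, ← Finset.sum_sub_distrib]
    refine Finset.sum_congr rfl fun a _ => ?_
    rw [← Finset.sum_add_distrib, ← Finset.sum_add_distrib, ← Finset.sum_sub_distrib]
    refine Finset.sum_congr rfl fun b _ => ?_
    rw [← Finset.sum_add_distrib, ← Finset.sum_add_distrib, ← Finset.sum_sub_distrib]
    exact Finset.sum_congr rfl fun c _ => by ring
  rw [combine]
  -- lower bound each term
  have hbound : ∀ a b c, q a b c - (∑ b', q a b' c) * (∑ a', q a' b c) / (∑ a', ∑ b', q a' b' c)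
      ≤ q a b c * (Real.log (q a b c) + Real.log (∑ a', ∑ b', q a' b' c)
          - Real.log (∑ b', q a b' c) - Real.log (∑ a', q a' b c)) := by
    intro a b c
    refine per_term_bound (hq a b c) ?_ ?_ ?_
    · exact Finset.single_le_sum (fun b' _ => hq a b' c) (Finset.mem_univ b)
    · exact Finset.single_le_sum (fun a' _ => hq a' b c) (Finset.mem_univ a)
    · exact Finset.single_le_sum (fun a' _ => hm13 a' c) (Finset.mem_univ a)
  have step1 : (∑ a, ∑ b, ∑ c,
        (q a b c - (∑ b', q a b' c) * (∑ a', q a' b c) / (∑ a', ∑ b', q a' b' c)))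
      ≤ ∑ a, ∑ b, ∑ c, (q a b c * (Real.log (q a b c) + Real.log (∑ a', ∑ b', q a' b' c)
          - Real.log (∑ b', q a b' c) - Real.log (∑ a', q a' b c))) := by
    refine Finset.sum_le_sum fun a _ => Finset.sum_le_sum fun b _ =>
      Finset.sum_le_sum fun c _ => hbound a b c
  refine le_trans ?_ step1
  have split : (∑ a, ∑ b, ∑ c,
        (q a b c - (∑ b', q a b' c) * (∑ a', q a' b c) / (∑ a', ∑ b', q a' b' c)))
      = (∑ a, ∑ b, ∑ c, q a b c)
        - ∑ a, ∑ b, ∑ c,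
            ((∑ b', q a b' c) * (∑ a', q a' b c) / (∑ a', ∑ b', q a' b' c)) := by
    simp [Finset.sum_sub_distrib]
  rw [split, sub_nonneg]
  rw [reord, reord fun a b c => q a b c]
  refine Finset.sum_le_sum fun c _ => ?_
  have inner : (∑ a, ∑ b, ((∑ b', q a b' c) * (∑ a', q a' b c) / (∑ a', ∑ b', q a' b' c)))
      = (∑ a', ∑ b', q a' b' c) * (∑ a', ∑ b', q a' b' c) / (∑ a', ∑ b', q a' b' c) := by
    have perA : ∀ a, (∑ b, ((∑ b', q a b' c) * (∑ a', q a' b c) / (∑ a', ∑ b', q a' b' c)))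
        = (∑ b', q a b' c) * (∑ b, ∑ a', q a' b c) / (∑ a', ∑ b', q a' b' c) := by
      intro a
      rw [← Finset.sum_div, ← Finset.mul_sum]
    simp_rw [perA]
    rw [← Finset.sum_div, ← Finset.sum_mul]
    congr 1
    · congr 1
      exact Finset.sum_comm
  rw [inner]
  rcases eq_or_lt_of_le (hm3 c) with h | h
  · rw [← h]; simp
  · rw [mul_div_assoc, div_self (ne_of_gt h), mul_one]
section Nonneg
variable {Ω A B C : Type*} [Fintype Ω] [Fintype A] [DecidableEq A] [Fintype B] [DecidableEq B]
  [Fintype C] [DecidableEq C] (p : Ω → ℝ)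

lemma ent_pair_expand (X : Ω → A) (Y : Ω → B) :
    ent p (fun ω => (X ω, Y ω))
      = ∑ a, ∑ b, Real.negMulLog (rvDist p (fun ω => (X ω, Y ω)) (a, b)) := by
  rw [ent, Fintype.sum_prod_type]

lemma condEnt_nonneg (hp : ∀ ω, 0 ≤ p ω) (X : Ω → A) (Y : Ω → B) :
    0 ≤ condEnt p X Y := by
  rw [condEnt, sub_nonneg]
  have h1 : ent p Y = ∑ b, Real.negMulLog (∑ a, rvDist p (fun ω => (X ω, Y ω)) (a, b)) := by
    rw [ent]
    exact Finset.sum_congr rfl fun b _ => by rw [← rvDist_dropFirst p X Y b]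
  rw [h1, ent_pair_expand, Finset.sum_comm]
  exact Finset.sum_le_sum fun b _ =>
    negMulLog_sum_le _ _ fun a _ => rvDist_nonneg p hp _ _

lemma CMI_nonneg (hp : ∀ ω, 0 ≤ p ω) (X : Ω → A) (Y : Ω → B) (Z : Ω → C) :
    0 ≤ CMI p X Y Z := by
  have hCMI : CMI p X Y Z = ent p (fun ω => (X ω, Z ω)) + ent p (fun ω => (Y ω, Z ω))
      - ent p (fun ω => ((X ω, Y ω), Z ω)) - ent p Z := by
    rw [CMI, condEnt, condEnt, condEnt]; ring
  set q : A → B → C → ℝ := fun a b c => rvDist p (fun ω => (X ω, (Y ω, Z ω))) (a, (b, c)) with hq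
  have hqnn : ∀ a b c, 0 ≤ q a b c := fun a b c => rvDist_nonneg p hp _ _
  have hXZ : ∀ a c, rvDist p (fun ω => (X ω, Z ω)) (a, c) = ∑ b, q a b c := by
    intro a c
    rw [rvDist_dropFirst p Y (fun ω => (X ω, Z ω)) (a, c)]
    refine Finset.sum_congr rfl fun b _ => ?_
    have hf : Function.Injective (fun t : B × (A × C) => (t.2.1, (t.1, t.2.2))) := by
      intro t t' h
      simp only [Prod.ext_iff] at h ⊢
      tauto
    exact (rvDist_comp p _ hf (fun ω => (Y ω, (X ω, Z ω))) (b, (a, c))).symm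
  have hYZ : ∀ b c, rvDist p (fun ω => (Y ω, Z ω)) (b, c) = ∑ a, q a b c := fun b c =>
    rvDist_dropFirst p X (fun ω => (Y ω, Z ω)) (b, c)
  have hZ : ∀ c, rvDist p Z c = ∑ a, ∑ b, q a b c := by
    intro c
    rw [rvDist_dropFirst p X Z c]
    exact Finset.sum_congr rfl fun a _ => hXZ a c
  have e1 : ent p (fun ω => (X ω, Z ω)) = ∑ a, ∑ c, Real.negMulLog (∑ b, q a b c) := by
    rw [ent_pair_expand]
    exact Finset.sum_congr rfl fun a _ => Finset.sum_congr rfl fun c _ => by rw [hXZ]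
  have e2 : ent p (fun ω => (Y ω, Z ω)) = ∑ b, ∑ c, Real.negMulLog (∑ a, q a b c) := by
    rw [ent_pair_expand]
    exact Finset.sum_congr rfl fun b _ => Finset.sum_congr rfl fun c _ => by rw [hYZ]
  have e3 : ent p (fun ω => ((X ω, Y ω), Z ω)) = ∑ a, ∑ b, ∑ c, Real.negMulLog (q a b c) := by
    have hrel : ent p (fun ω => ((X ω, Y ω), Z ω)) = ent p (fun ω => (X ω, (Y ω, Z ω))) :=
      ent_eq_of_inj p (fun ω => (X ω, (Y ω, Z ω))) _
        (fun t : A × (B × C) => ((t.1, t.2.1), t.2.2))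
        (by intro t t' h; simp only [Prod.ext_iff] at h ⊢; tauto)
        (fun ω => rfl)
    rw [hrel, ent, Fintype.sum_prod_type]
    exact Finset.sum_congr rfl fun a _ => by rw [Fintype.sum_prod_type]
  have e4 : ent p Z = ∑ c, Real.negMulLog (∑ a, ∑ b, q a b c) := by
    rw [ent]
    exact Finset.sum_congr rfl fun c _ => by rw [hZ]
  rw [hCMI, e1, e2, e3, e4]
  have := key_ineq q hqnn
  linarith
end Nonneg


section More
variable {Ω M A B C : Type*} [Fintype Ω] [Fintype M] [DecidableEq M]
  [Fintype A] [DecidableEq A] [Fintype B] [DecidableEq B]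
  [Fintype C] [DecidableEq C] (p : Ω → ℝ)

lemma condEnt_eq_of_inj (Y : Ω → A) (W : Ω → B) (W' : Ω → C) (f : B → C)
    (hf : Function.Injective f) (h : ∀ ω, W' ω = f (W ω)) :
    condEnt p Y W' = condEnt p Y W := by
  rw [condEnt, condEnt]
  have h1 : ent p (fun ω => (Y ω, W' ω)) = ent p (fun ω => (Y ω, W ω)) :=
    ent_eq_of_inj p _ _ (Prod.map id f) (Function.Injective.prodMap Function.injective_id hf)
      (fun ω => by simp [h ω, Prod.map])
  have h2 : ent p W' = ent p W := ent_eq_of_inj p _ _ f hf h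
  rw [h1, h2]

/-- If `V` is determined by `W`, conditioning additionally on `V` changes nothing. -/
lemma condEnt_pair_of_det (hp : ∀ ω, 0 ≤ p ω) (Y : Ω → A) (V : Ω → B) (W : Ω → C)
    (h : condEnt p V W = 0) :
    condEnt p Y (fun ω => (W ω, V ω)) = condEnt p Y W := by
  have hVW : ent p (fun ω => (V ω, W ω)) = ent p W := by
    rw [condEnt] at h; linarith
  have hWV : ent p (fun ω => (W ω, V ω)) = ent p (fun ω => (V ω, W ω)) :=
    ent_eq_of_inj p _ _ Prod.swap Prod.swap_injective (fun ω => rfl)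
  have hlow : ent p (fun ω => (Y ω, W ω)) ≤ ent p (fun ω => (V ω, (Y ω, W ω))) := by
    have := condEnt_nonneg p hp V (fun ω => (Y ω, W ω))
    rw [condEnt] at this; linarith
  have hrel1 : ent p (fun ω => (V ω, (Y ω, W ω))) = ent p (fun ω => (Y ω, (W ω, V ω))) :=
    ent_eq_of_inj p _ _ (fun t : A × (C × B) => (t.2.2, (t.1, t.2.1)))
      (by intro t t' h; simp only [Prod.ext_iff] at h ⊢; tauto) (fun ω => rfl)
  have hup : ent p (fun ω => (Y ω, (W ω, V ω))) ≤ ent p (fun ω => (Y ω, W ω)) := by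
    have hcmi := CMI_nonneg p hp V Y W
    rw [CMI, condEnt, condEnt, condEnt] at hcmi
    have hrel2 : ent p (fun ω => ((V ω, Y ω), W ω)) = ent p (fun ω => (Y ω, (W ω, V ω))) :=
      ent_eq_of_inj p _ _ (fun t : A × (C × B) => ((t.2.2, t.1), t.2.1))
        (by intro t t' h; simp only [Prod.ext_iff] at h ⊢; tauto) (fun ω => rfl)
    rw [hrel2] at hcmi
    linarith
  rw [condEnt, condEnt, hWV, hVW]
  have : ent p (fun ω => (Y ω, (W ω, V ω))) = ent p (fun ω => (Y ω, W ω)) :=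
    le_antisymm hup (le_trans hlow (le_of_eq hrel1))
  rw [this]

/-- Part 1 per-term identity (pure relabeling algebra). -/
lemma part1_term (X : Ω → A) (Y : Ω → B) (Z : Ω → C) (x0 : Ω → M) :
    CMI p X Y Z = (condEnt p Y Z - condEnt p Y (fun ω => (Z ω, x0 ω, X ω)))
      - CMI p x0 Y (fun ω => (Z ω, X ω)) := by
  have E1 : ent p (fun ω => (Z ω, (x0 ω, X ω))) = ent p (fun ω => (x0 ω, (Z ω, X ω))) :=
    ent_eq_of_inj p _ _ (fun t : M × (C × A) => (t.2.1, (t.1, t.2.2)))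
      (by intro t t' h; simp only [Prod.ext_iff] at h ⊢; tauto) (fun ω => rfl)
  have E2 : ent p (fun ω => (Y ω, (Z ω, (x0 ω, X ω))))
      = ent p (fun ω => ((x0 ω, Y ω), (Z ω, X ω))) :=
    ent_eq_of_inj p _ _ (fun t : (M × B) × (C × A) => (t.1.2, (t.2.1, (t.1.1, t.2.2))))
      (by intro t t' h; simp only [Prod.ext_iff] at h ⊢; tauto) (fun ω => rfl)
  have E3 : ent p (fun ω => (X ω, Z ω)) = ent p (fun ω => (Z ω, X ω)) :=
    ent_eq_of_inj p _ _ Prod.swap Prod.swap_injective (fun ω => rfl)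
  have E4 : ent p (fun ω => ((X ω, Y ω), Z ω)) = ent p (fun ω => (Y ω, (Z ω, X ω))) :=
    ent_eq_of_inj p _ _ (fun t : B × (C × A) => ((t.2.2, t.1), t.2.1))
      (by intro t t' h; simp only [Prod.ext_iff] at h ⊢; tauto) (fun ω => rfl)
  simp only [CMI, condEnt]
  rw [E1, E2, E3, E4]
  ring

end More

/-- Padded prefix of length `k`, as a map into a fixed type. -/
def pad {Ω B : Type*} {n : ℕ} (e : Fin n → Ω → B) (k : ℕ) : Ω → (Fin n → Option B) :=
  fun ω j => if j.1 < k then some (e j ω) else none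

def padMap {B : Type*} {n : ℕ} (k : ℕ) (hk : k ≤ n) : (Fin k → B) → (Fin n → Option B) :=
  fun v j => if h : j.1 < k then some (v ⟨j.1, h⟩) else none

lemma padMap_inj {B : Type*} {n : ℕ} (k : ℕ) (hk : k ≤ n) :
    Function.Injective (padMap (B := B) (n := n) k hk) := by
  intro v v' h
  funext j
  have h2 := congrFun h (Fin.castLE hk j)
  simp only [padMap, Fin.coe_castLE, j.isLt, dif_pos] at h2
  simpa [Fin.eta] using h2

lemma pad_eq_padMap_pre {Ω B : Type*} {n : ℕ} (e : Fin n → Ω → B) (k : ℕ) (hk : k ≤ n) :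
    ∀ ω, pad e k ω = padMap k hk (pre e k hk ω) := by
  intro ω
  funext j
  simp only [pad, padMap, pre]
  by_cases h : j.1 < k
  · rw [if_pos h, dif_pos h, show Fin.castLE hk ⟨j.1, h⟩ = j from Fin.ext rfl]
  · rw [if_neg h, dif_neg h]

def padMap2 {B : Type*} {n : ℕ} (i : ℕ) (hi : i < n) :
    B × (Fin i → B) → (Fin n → Option B) :=
  fun bv j => if h : j.1 < i then some (bv.2 ⟨j.1, h⟩) else if j.1 = i then some bv.1 else none

lemma padMap2_inj {B : Type*} {n : ℕ} (i : ℕ) (hi : i < n) :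
    Function.Injective (padMap2 (B := B) (n := n) i hi) := by
  intro bv bv' h
  have hb := congrFun h ⟨i, hi⟩
  simp only [padMap2, lt_irrefl, dif_neg, not_false_iff, if_pos] at hb
  have hv : bv.2 = bv'.2 := by
    funext j
    have h2 := congrFun h (Fin.castLE hi.le j)
    simp only [padMap2, Fin.coe_castLE, j.isLt, dif_pos] at h2
    simpa [Fin.eta] using h2
  exact Prod.ext (by simpa using hb) hv

lemma pad_succ_eq {Ω B : Type*} {n : ℕ} (e : Fin n → Ω → B) (i : Fin n) :
    ∀ ω, pad e (i.1 + 1) ω = padMap2 i.1 i.isLt (e i ω, pre e i.1 i.isLt.le ω) := by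
  intro ω
  funext j
  simp only [pad, padMap2, pre]
  rcases lt_trichotomy j.1 i.1 with h | h | h
  · rw [if_pos (by omega), dif_pos h, show Fin.castLE i.isLt.le ⟨j.1, h⟩ = j from Fin.ext rfl]
  · rw [if_pos (by omega), dif_neg (by omega), if_pos h, show j = i from Fin.ext h]
  · rw [if_neg (by omega), dif_neg (by omega), if_neg (by omega)]


/-- chain rule for directed information with an initial condition,
and the consequence `I(x^n → e^n) ≤ I(x_0; e^n)`. -/
theorem directed_info_chain_rule_initial {Ω M A B : Type*} [Fintype Ω]
    [Fintype M] [DecidableEq M] [Fintype A] [DecidableEq A]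
    [Fintype B] [DecidableEq B] {n : ℕ} (p : Ω → ℝ)
    (hp : ∀ ω, 0 ≤ p ω) (hp1 : ∑ ω, p ω = 1)
    (x0 : Ω → M) (x : Fin n → Ω → A) (e : Fin n → Ω → B)
    (hdet : ∀ i : Fin n, condEnt p (x i) (fun ω => (x0 ω, pre e i.1 i.isLt.le ω)) = 0) :
    (∑ i : Fin n, CMI p (pre x (i.1+1) i.isLt) (e i) (pre e i.1 i.isLt.le)) =
      (∑ i : Fin n, (condEnt p (e i) (pre e i.1 i.isLt.le) -
        condEnt p (e i) (fun ω => (pre e i.1 i.isLt.le ω, x0 ω, pre x (i.1+1) i.isLt ω))))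
      - ∑ i : Fin n, CMI p x0 (e i)
          (fun ω => (pre e i.1 i.isLt.le ω, pre x (i.1+1) i.isLt ω)) ∧
    ((∀ i : Fin n, condEnt p (pre x (i.1+1) i.isLt)
        (fun ω => (x0 ω, pre e i.1 i.isLt.le ω)) = 0) →
      DI p x e ≤ MI p x0 (fun ω i => e i ω)) := by
  have part1 : (∑ i : Fin n, CMI p (pre x (i.1+1) i.isLt) (e i) (pre e i.1 i.isLt.le)) =
      (∑ i : Fin n, (condEnt p (e i) (pre e i.1 i.isLt.le) -
        condEnt p (e i) (fun ω => (pre e i.1 i.isLt.le ω, x0 ω, pre x (i.1+1) i.isLt ω))))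
      - ∑ i : Fin n, CMI p x0 (e i)
          (fun ω => (pre e i.1 i.isLt.le ω, pre x (i.1+1) i.isLt ω)) := by
    rw [← Finset.sum_sub_distrib]
    exact Finset.sum_congr rfl fun i _ => part1_term p _ _ _ _
  refine ⟨part1, ?_⟩
  intro hdet2
  set F : ℕ → ℝ := fun k => ent p (pad e k) with hF
  set G : ℕ → ℝ := fun k => ent p (fun ω => (x0 ω, pad e k ω)) with hG
  have hpreF : ∀ (k : ℕ) (hk : k ≤ n), ent p (pre e k hk) = F k := fun k hk =>
    (ent_eq_of_inj p (pre e k hk) (pad e k) (padMap k hk) (padMap_inj k hk)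
      (pad_eq_padMap_pre e k hk)).symm
  have hpairF : ∀ i : Fin n, ent p (fun ω => (e i ω, pre e i.1 i.isLt.le ω)) = F (i.1+1) :=
    fun i => (ent_eq_of_inj p _ (pad e (i.1+1)) (padMap2 i.1 i.isLt) (padMap2_inj i.1 i.isLt)
      (pad_succ_eq e i)).symm
  have hpreG : ∀ (k : ℕ) (hk : k ≤ n),
      ent p (fun ω => (x0 ω, pre e k hk ω)) = G k := fun k hk =>
    (ent_eq_of_inj p _ (fun ω => (x0 ω, pad e k ω)) (Prod.map id (padMap k hk))
      (Function.Injective.prodMap Function.injective_id (padMap_inj k hk))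
      (fun ω => by simp [Prod.map, pad_eq_padMap_pre e k hk ω])).symm
  have hpairG : ∀ i : Fin n,
      ent p (fun ω => (e i ω, (x0 ω, pre e i.1 i.isLt.le ω))) = G (i.1+1) := by
    intro i
    have step1 : ent p (fun ω => (e i ω, (x0 ω, pre e i.1 i.isLt.le ω)))
        = ent p (fun ω => (x0 ω, (e i ω, pre e i.1 i.isLt.le ω))) :=
      ent_eq_of_inj p _ _ (fun t : M × (B × (Fin i.1 → B)) => (t.2.1, (t.1, t.2.2)))
        (by intro t t' h; simp only [Prod.ext_iff] at h ⊢; tauto) (fun ω => rfl)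
    rw [step1]
    exact (ent_eq_of_inj p _ (fun ω => (x0 ω, pad e (i.1+1) ω))
      (Prod.map id (padMap2 i.1 i.isLt))
      (Function.Injective.prodMap Function.injective_id (padMap2_inj i.1 i.isLt))
      (fun ω => by simp [Prod.map, pad_succ_eq e i ω])).symm
  have stepB : ∀ i : Fin n,
      condEnt p (e i) (fun ω => (pre e i.1 i.isLt.le ω, x0 ω, pre x (i.1+1) i.isLt ω))
      = condEnt p (e i) (fun ω => (x0 ω, pre e i.1 i.isLt.le ω)) := by
    intro i
    have hrel : condEnt p (e i)
        (fun ω => (pre e i.1 i.isLt.le ω, x0 ω, pre x (i.1+1) i.isLt ω))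
        = condEnt p (e i)
            (fun ω => ((x0 ω, pre e i.1 i.isLt.le ω), pre x (i.1+1) i.isLt ω)) :=
      condEnt_eq_of_inj p (e i) _ _
        (fun t : (M × (Fin i.1 → B)) × (Fin (i.1+1) → A) => (t.1.2, (t.1.1, t.2)))
        (by intro t t' h; simp only [Prod.ext_iff] at h ⊢; tauto) (fun ω => rfl)
    rw [hrel]
    exact condEnt_pair_of_det p hp (e i) (pre x (i.1+1) i.isLt)
      (fun ω => (x0 ω, pre e i.1 i.isLt.le ω)) (hdet2 i)
  have tele1 : ∑ i : Fin n, condEnt p (e i) (pre e i.1 i.isLt.le) = F n - F 0 := by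
    have per : ∀ i : Fin n, condEnt p (e i) (pre e i.1 i.isLt.le) = F (i.1+1) - F i.1 := by
      intro i; rw [condEnt, hpairF i, hpreF i.1 i.isLt.le]
    rw [Finset.sum_congr rfl fun i _ => per i,
      Fin.sum_univ_eq_sum_range (fun k => F (k+1) - F k) n]
    exact Finset.sum_range_sub F n
  have tele2 : ∑ i : Fin n, condEnt p (e i) (fun ω => (x0 ω, pre e i.1 i.isLt.le ω))
      = G n - G 0 := by
    have per : ∀ i : Fin n, condEnt p (e i) (fun ω => (x0 ω, pre e i.1 i.isLt.le ω))
        = G (i.1+1) - G i.1 := by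
      intro i; rw [condEnt, hpairG i, hpreG i.1 i.isLt.le]
    rw [Finset.sum_congr rfl fun i _ => per i,
      Fin.sum_univ_eq_sum_range (fun k => G (k+1) - G k) n]
    exact Finset.sum_range_sub G n
  have hpad0 : pad e 0 = fun _ _ => (none : Option B) := by
    funext ω j; simp [pad]
  have hF0 : F 0 = 0 := by
    show ent p (pad e 0) = 0
    rw [hpad0]; exact ent_const p hp1 _
  have hG0 : G 0 = ent p x0 := by
    show ent p (fun ω => (x0 ω, pad e 0 ω)) = ent p x0
    exact ent_eq_of_inj p x0 _ (fun m => (m, fun _ => (none : Option B)))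
      (fun a b h => congrArg Prod.fst h)
      (fun ω => by rw [hpad0])
  have hFn : F n = ent p (fun ω (i : Fin n) => e i ω) := by
    show ent p (pad e n) = _
    exact ent_eq_of_inj p (fun ω (i : Fin n) => e i ω) (pad e n)
      (fun v j => some (v j))
      (fun v v' h => funext fun j => Option.some_injective _ (congrFun h j))
      (fun ω => by funext j; simp [pad, j.isLt])
  have hGn : G n = ent p (fun ω => (x0 ω, fun i : Fin n => e i ω)) := by
    show ent p (fun ω => (x0 ω, pad e n ω)) = _
    exact (ent_eq_of_inj p (fun ω => (x0 ω, fun i : Fin n => e i ω))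
      (fun ω => (x0 ω, pad e n ω))
      (Prod.map id (fun (v : Fin n → B) (j : Fin n) => some (v j)))
      (Function.Injective.prodMap Function.injective_id
        (fun v v' h => funext fun j => Option.some_injective _ (congrFun h j)))
      (fun ω => by
        show (x0 ω, pad e n ω) = (x0 ω, fun j : Fin n => some (e j ω))
        refine congrArg (Prod.mk (x0 ω)) ?_
        funext j; simp [pad, j.isLt]))
  have hsum_nonneg : 0 ≤ ∑ i : Fin n, CMI p x0 (e i)
      (fun ω => (pre e i.1 i.isLt.le ω, pre x (i.1+1) i.isLt ω)) :=
    Finset.sum_nonneg fun i _ => CMI_nonneg p hp _ _ _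
  have hsplit : (∑ i : Fin n, (condEnt p (e i) (pre e i.1 i.isLt.le) -
        condEnt p (e i) (fun ω => (pre e i.1 i.isLt.le ω, x0 ω, pre x (i.1+1) i.isLt ω))))
      = (F n - F 0) - (G n - G 0) := by
    rw [Finset.sum_sub_distrib, tele1,
      Finset.sum_congr rfl fun i _ => stepB i, tele2]
  rw [DI, part1, hsplit, MI]
  linarith [hsum_nonneg, hF0, hG0, hFn, hGn]
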